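/- Positivity is preserved: let φ : ℝ → ℝ be locally Lipschitz with φ(0) = 0 and φ(x) ≥ 0 for all x ≥ 0, let N ≥ 1, and let u : [0,T) → ℝ^{N+1} be a solution of the grid system u'(t) = Δ_N(φ∘u(t)) with u_i(0) ≥ 0 for all 0 ≤ i ≤ N. Then u_i(t) ≥ 0 for every t ∈ [0,T) and every 0 ≤ i ≤ N. -/

import Mathlib

/-- The discrete Neumann Laplacian on `{0,…,N}` with mesh `ε = 1/N`:
`(Δ_N w)_i = (w_{i+1} − 2w_i + w_{i−1})/ε²` for `0 < i < N`,
`(Δ_N w)_0 = (w_1 − w_0)/ε²`, `(Δ_N w)_N = (w_{N−1} − w_N)/ε²`. -/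
noncomputable def lapN (N : ℕ) (w : Fin (N + 1) → ℝ) (i : Fin (N + 1)) : ℝ :=
  if i.val = 0 then
    (N : ℝ) ^ 2 * (w ⟨min 1 N, by omega⟩ - w ⟨0, by omega⟩)
  else if h : i.val = N then
    (N : ℝ) ^ 2 * (w ⟨N - 1, by omega⟩ - w ⟨N, by omega⟩)
  else
    (N : ℝ) ^ 2 *
      (w ⟨i.val + 1, by have := i.isLt; omega⟩ - 2 * w i + w ⟨i.val - 1, by omega⟩)

/-- positivity is preserved by the grid system `u' = Δ_N(φ∘u)` on
`[0,T)` when `φ` is locally Lipschitz, `φ(0) = 0` and `φ ≥ 0` on `[0,∞)`. -/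
lemma negPartSq_hasDerivAt (x : ℝ) :
    HasDerivAt (fun y : ℝ => (min y 0) ^ 2) (2 * min x 0) x := by
  rcases lt_trichotomy x 0 with hx | hx | hx
  · have h1 : HasDerivAt (fun y : ℝ => y ^ 2) (2 * x) x := by
      simpa using hasDerivAt_pow 2 x
    have heq : (fun y : ℝ => (min y 0) ^ 2) =ᶠ[nhds x] fun y => y ^ 2 := by
      filter_upwards [Iio_mem_nhds hx] with y hy
      rw [min_eq_left hy.le]
    rw [min_eq_left hx.le]
    exact h1.congr_of_eventuallyEq heq
  · subst hx
    rw [min_self, mul_zero, hasDerivAt_iff_isLittleO]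
    simp only [min_self, ne_eq, OfNat.ofNat_ne_zero, not_false_eq_true, zero_pow, sub_zero,
      smul_zero]
    rw [Asymptotics.isLittleO_iff]
    intro c hc
    have hev : ∀ᶠ y in nhds (0 : ℝ), |y - 0| < c := by
      have := Metric.ball_mem_nhds (0 : ℝ) hc
      filter_upwards [this] with y hy
      simpa [Real.dist_eq] using hy
    filter_upwards [hev] with y hy
    have h1 : |min y 0| ≤ |y| := by
      rcases le_total y 0 with h | h
      · rw [min_eq_left h]
      · rw [min_eq_right h]; simp [abs_nonneg]
    have h2 : (min y 0) ^ 2 ≤ |y| ^ 2 := by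
      rw [← sq_abs]; exact pow_le_pow_left₀ (abs_nonneg _) h1 2
    rw [sub_zero] at hy
    simp only [norm_pow, Real.norm_eq_abs, sub_zero]
    calc |min y 0| ^ 2 ≤ |y| ^ 2 := by rw [sq_abs]; exact h2
      _ = |y| * |y| := sq (|y|) ▸ by ring
      _ ≤ c * |y| := mul_le_mul_of_nonneg_right hy.le (abs_nonneg _)
  · have heq : (fun y : ℝ => (min y 0) ^ 2) =ᶠ[nhds x] fun _ => (0 : ℝ) := by
      filter_upwards [Ioi_mem_nhds hx] with y hy
      rw [min_eq_right hy.le]; ring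
    rw [min_eq_right hx.le, mul_zero]
    exact (hasDerivAt_const x (0 : ℝ)).congr_of_eventuallyEq heq

lemma linear_bound (φ : ℝ → ℝ) (hφ : LocallyLipschitz φ) (hφ0 : φ 0 = 0) (M : ℝ) :
    ∃ L : ℝ, 0 ≤ L ∧ ∀ x : ℝ, -M ≤ x → x ≤ 0 → |φ x| ≤ L * |x| := by
  obtain ⟨K0, t0, ht0, hK0⟩ := hφ 0
  obtain ⟨η, hη, hball⟩ := Metric.mem_nhds_iff.1 ht0
  obtain ⟨C, hC⟩ := (isCompact_Icc (a := -M) (b := 0)).exists_bound_of_continuousOn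
    hφ.continuous.continuousOn
  refine ⟨(K0 : ℝ) + max C 0 / η, by positivity, fun x hx1 hx2 => ?_⟩
  rcases lt_or_ge (|x|) η with h | h
  · have hxball : x ∈ Metric.ball (0 : ℝ) η := by simpa [Real.dist_eq] using h
    have h2 := hK0.dist_le_mul x (hball hxball) 0 (hball (Metric.mem_ball_self hη))
    rw [Real.dist_eq, Real.dist_eq, hφ0, sub_zero, sub_zero] at h2
    have : (0:ℝ) ≤ max C 0 / η * |x| := by positivity
    nlinarith
  · have hxC : |φ x| ≤ max C 0 := le_trans (by simpa using hC x ⟨hx1, hx2⟩) (le_max_left _ _)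
    have h2 : max C 0 ≤ max C 0 / η * |x| := by
      rw [div_mul_eq_mul_div, le_div_iff₀ hη]
      exact mul_le_mul_of_nonneg_left h (le_max_right _ _)
    have h3 : (0:ℝ) ≤ (K0 : ℝ) * |x| := by positivity
    nlinarith

open Set Finset Filter in
theorem stmt6 (φ : ℝ → ℝ) (hφ : LocallyLipschitz φ) (hφ0 : φ 0 = 0)
    (hφpos : ∀ x : ℝ, 0 ≤ x → 0 ≤ φ x) (N : ℕ) (hN : 1 ≤ N) (T : ℝ)
    (u : ℝ → Fin (N + 1) → ℝ)
    (hu : ∀ t ∈ Set.Ico (0 : ℝ) T,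
      HasDerivWithinAt u (lapN N fun i => φ (u t i)) (Set.Ico 0 T) t)
    (h0 : ∀ i, 0 ≤ u 0 i) :
    ∀ t ∈ Set.Ico (0 : ℝ) T, ∀ i, 0 ≤ u t i := by
  intro t ht
  obtain ⟨ht0, htT⟩ := ht
  have hucont : ContinuousOn u (Ico 0 T) := fun s hs => (hu s hs).continuousWithinAt
  have hIcc : Icc (0:ℝ) t ⊆ Ico 0 T := fun s hs => ⟨hs.1, lt_of_le_of_lt hs.2 htT⟩
  -- uniform bound on u over [0, t]
  obtain ⟨M, hM⟩ : ∃ M, ∀ s ∈ Icc (0:ℝ) t, ∀ i, |u s i| ≤ M := by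
    obtain ⟨C, hC⟩ := isCompact_Icc.exists_bound_of_continuousOn (hucont.mono hIcc)
    refine ⟨C, fun s hs i => ?_⟩
    have h1 : ‖u s i‖ ≤ ‖u s‖ := norm_le_pi_norm (u s) i
    simpa [Real.norm_eq_abs] using h1.trans (hC s hs)
  obtain ⟨L, hL0, hLb⟩ := linear_bound φ hφ hφ0 M
  set A : ℝ → Fin (N+1) → ℝ := fun s i => min (u s i) 0 with hA
  set ψ : ℝ → ℝ := fun s => ∑ i, (A s i) ^ 2 with hψdef
  set lap : ℝ → Fin (N+1) → ℝ := fun s => lapN N (fun i => φ (u s i)) with hlapdef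
  set ψ' : ℝ → ℝ := fun s => ∑ i, 2 * A s i * lap s i with hψ'def
  set K : ℝ := (N+1 : ℝ) * (8 * (N:ℝ)^2 * L) with hKdef
  -- derivative of ψ
  have hder : ∀ s ∈ Ico (0:ℝ) t, HasDerivWithinAt ψ (ψ' s) (Ici s) s := by
    intro s hs
    have hsT : s ∈ Ico (0:ℝ) T := ⟨hs.1, hs.2.trans htT⟩
    have h1 : HasDerivWithinAt u (lap s) (Ico 0 T) s := hu s hsT
    have h2 : HasDerivWithinAt ψ (ψ' s) (Ico 0 T) s := by
      apply HasDerivWithinAt.fun_sum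
      intro i _
      exact (negPartSq_hasDerivAt (u s i)).comp_hasDerivWithinAt s
        ((hasDerivWithinAt_pi.1 h1) i)
    refine h2.mono_of_mem_nhdsWithin ?_
    rw [mem_nhdsWithin]
    exact ⟨Iio T, isOpen_Iio, hsT.2, fun y hy => ⟨hsT.1.trans hy.2, hy.1⟩⟩
  -- continuity of ψ
  have hψcont : ContinuousOn ψ (Icc 0 t) := by
    apply continuousOn_finset_sum
    intro i _
    have h1 : ContinuousOn (fun s => u s i) (Icc 0 t) :=
      (continuous_apply i).comp_continuousOn (hucont.mono hIcc)
    exact ((continuous_id.min continuous_const).comp_continuousOn h1).pow 2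
  -- the Gronwall bound
  have hbound : ∀ s ∈ Ico (0:ℝ) t, ψ' s ≤ K * ψ s + 0 := by
    intro s hs
    have hsIcc : s ∈ Icc (0:ℝ) t := ⟨hs.1, hs.2.le⟩
    have hS0 : 0 ≤ ψ s := Finset.sum_nonneg fun j _ => sq_nonneg _
    have hsq : ∀ j : Fin (N+1), (A s j)^2 ≤ ψ s := fun j =>
      Finset.single_le_sum (fun k _ => sq_nonneg (A s k)) (Finset.mem_univ j)
    have hAle : ∀ j, A s j ≤ 0 := fun j => min_le_right _ _
    have hw : ∀ j, u s j < 0 → |φ (u s j)| ≤ L * |A s j| := by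
      intro j hj
      have h1 := hM s hsIcc j
      have h2 : -M ≤ u s j := by
        have := abs_le.1 h1; linarith [this.1]
      have h3 : A s j = u s j := min_eq_left hj.le
      rw [h3]
      exact hLb _ h2 hj.le
    have key : ∀ i j, A s i * φ (u s j) ≤ L * ψ s := by
      intro i j
      rcases le_or_gt 0 (u s j) with h | h
      · have h1 : 0 ≤ φ (u s j) := hφpos _ h
        have h2 := mul_nonpos_of_nonpos_of_nonneg (hAle i) h1
        have : (0:ℝ) ≤ L * ψ s := mul_nonneg hL0 hS0
        linarith
      · have h2 := hw j h
        have h3 : A s i * φ (u s j) ≤ |A s i| * |φ (u s j)| := by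
          calc A s i * φ (u s j) ≤ |A s i * φ (u s j)| := le_abs_self _
            _ = |A s i| * |φ (u s j)| := abs_mul _ _
        have h4 : |A s i| * |φ (u s j)| ≤ |A s i| * (L * |A s j|) :=
          mul_le_mul_of_nonneg_left h2 (abs_nonneg _)
        nlinarith [hsq i, hsq j, sq_nonneg (|A s i| - |A s j|), sq_abs (A s i),
          sq_abs (A s j), hL0, abs_nonneg (A s i), abs_nonneg (A s j)]
    have key2 : ∀ i, -(A s i * φ (u s i)) ≤ L * ψ s := by
      intro i
      rcases le_or_gt 0 (u s i) with h | h
      · have h1 : A s i = 0 := min_eq_right h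
        rw [h1]
        simp only [zero_mul, neg_zero]
        exact mul_nonneg hL0 hS0
      · have h2 := hw i h
        nlinarith [hsq i, sq_abs (A s i), abs_nonneg (A s i),
          le_abs_self (-(A s i * φ (u s i))), abs_neg (A s i * φ (u s i)),
          abs_mul (A s i) (φ (u s i))]
    have hterm : ∀ i : Fin (N+1), 2 * A s i * lap s i ≤ 8 * (N:ℝ)^2 * L * ψ s := by
      intro i
      have hc : (0:ℝ) ≤ (N:ℝ)^2 := sq_nonneg _
      have hLS : (0:ℝ) ≤ L * ψ s := mul_nonneg hL0 hS0
      rw [hlapdef]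
      simp only [lapN]
      split_ifs with h1 h2
      · have hi : i = ⟨0, by omega⟩ := Fin.ext (by simpa using h1)
        rw [hi]
        have k1 := key ⟨0, by omega⟩ ⟨min 1 N, by omega⟩
        have k2 := key2 ⟨0, by omega⟩
        nlinarith [mul_le_mul_of_nonneg_left k1 hc, mul_le_mul_of_nonneg_left k2 hc,
          mul_nonneg hc hLS]
      · have hi : i = ⟨N, by omega⟩ := Fin.ext (by simpa using h2)
        simp only [hi]
        have k1 := key ⟨N, by omega⟩ ⟨N - 1, by omega⟩
        have k2 := key2 ⟨N, by omega⟩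
        nlinarith [mul_le_mul_of_nonneg_left k1 hc, mul_le_mul_of_nonneg_left k2 hc,
          mul_nonneg hc hLS]
      · have k1 := key i ⟨i.val + 1, by have := i.isLt; omega⟩
        have k2 := key i ⟨i.val - 1, by omega⟩
        have k3 := key2 i
        nlinarith [mul_le_mul_of_nonneg_left k1 hc, mul_le_mul_of_nonneg_left k2 hc,
          mul_le_mul_of_nonneg_left k3 hc, mul_nonneg hc hLS]
    calc ψ' s = ∑ i, 2 * A s i * lap s i := rfl
      _ ≤ ∑ _i : Fin (N+1), 8 * (N:ℝ)^2 * L * ψ s := Finset.sum_le_sum fun i _ => hterm i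
      _ = (N+1 : ℝ) * (8 * (N:ℝ)^2 * L) * ψ s := by
          rw [Finset.sum_const, Finset.card_univ, Fintype.card_fin]
          push_cast
          ring
      _ = K * ψ s + 0 := by rw [hKdef]; ring
  have hψ0 : ψ 0 ≤ 0 := by
    have : ψ 0 = 0 := Finset.sum_eq_zero fun i _ => by
      have : A 0 i = 0 := min_eq_right (h0 i)
      rw [this]; ring
    linarith
  have hψt := le_gronwallBound_of_liminf_deriv_right_le hψcont
    (fun x hx r hr => (hder x hx).liminf_right_slope_le hr) hψ0 hbound t
    ⟨ht0, le_refl t⟩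
  rw [gronwallBound_ε0_δ0] at hψt
  intro i
  have hsq : (A t i)^2 ≤ ψ t :=
    Finset.single_le_sum (fun k _ => sq_nonneg (A t k)) (Finset.mem_univ i)
  have hA0 : A t i = 0 := by nlinarith [sq_nonneg (A t i)]
  have := min_le_left (u t i) 0
  rw [hA] at hA0
  simp only at hA0
  linarith [hA0 ▸ min_le_left (u t i) 0]
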